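/- Let G be a group, A a strongly G-graded ring, and M a module over A. If M is flat over the subring A(Γ) for every finitely generated subgroup Γ of G, then M is flat over A. -/
import Mathlib


open Pointwise

/-- `𝒜` is a strongly `Γ`-graded ring structure on the ring `A`:  `A` is the internal direct
sum of the additive subgroups `𝒜 g` (`g ∈ Γ`), and `A_g · A_h = A_{g·h}` for all `g h : Γ`
(the inclusion `A_g · A_h ⊆ A_{g·h}` is the field `mul_mem`; the reverse inclusion, saying the
grading is *strong*, is the field `strong`). -/
structure IsStronglyGraded {Γ : Type*} [Group Γ] {A : Type*} [Ring A]
    (𝒜 : Γ → AddSubgroup A) : Prop where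
  independent : iSupIndep 𝒜
  iSup_eq_top : ⨆ g, 𝒜 g = ⊤
  one_mem : (1 : A) ∈ 𝒜 1
  mul_mem : ∀ {g h : Γ} {a b : A}, a ∈ 𝒜 g → b ∈ 𝒜 h → a * b ∈ 𝒜 (g * h)
  strong : ∀ g h : Γ, (𝒜 (g * h) : Set A) ⊆
    (AddSubgroup.closure ((𝒜 g : Set A) * (𝒜 h : Set A)) : Set A)

/-- For a subgroup `U ≤ Γ`, the subring `A(U) = ⊕_{u ∈ U} A_u` of `A`.  (For a graded ring, the
additive subgroup `⊕_{u ∈ U} A_u` is a subring, and it coincides with the subring of `A`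
generated by the pieces `𝒜 u`, `u ∈ U`, which is how we realize it here.)  Every `A`-module is
a module over this subring by restriction of scalars.  In particular `gradedSubring 𝒜 ⊥` is the
base ring `A_e` of the graded ring. -/
def gradedSubring {Γ : Type*} [Group Γ] {A : Type*} [Ring A]
    (𝒜 : Γ → AddSubgroup A) (U : Subgroup Γ) : Subring A :=
  Subring.closure (⋃ u ∈ U, (𝒜 u : Set A))

/-- `M` is a flat left `R`-module, expressed by the standard equational criterion of flatness
(valid over an arbitrary, possibly noncommutative, ring): every linear relation
`∑ i, r i • x i = 0` in `M` comes from linear relations in `R`, i.e. there are `y j ∈ M` and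
`a i j ∈ R` with `∑ i, r i * a i j = 0` for all `j` and `x i = ∑ j, a i j • y j` for all `i`. -/
def IsFlatOver (R : Type*) (M : Type*) [Ring R] [AddCommGroup M] [Module R M] : Prop :=
  ∀ (n : ℕ) (r : Fin n → R) (x : Fin n → M), ∑ i, r i • x i = 0 →
    ∃ (m : ℕ) (a : Fin n → Fin m → R) (y : Fin m → M),
      (∀ j, ∑ i, r i * a i j = 0) ∧ ∀ i, x i = ∑ j, a i j • y j

/-- **Lemma 2.1.**  Let `A` be a strongly `G`-graded ring and `M` an `A`-module.  If `M` is
flat over the subring `A(Γ)` for every finitely generated subgroup `Γ` of `G`, then `M` is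
flat over `A`. -/
theorem flat_of_forall_fg_subgroup_flat {G : Type*} [Group G] {A : Type*} [Ring A]
    (𝒜 : G → AddSubgroup A) (hA : IsStronglyGraded 𝒜)
    (M : Type*) [AddCommGroup M] [Module A M]
    (h : ∀ Γ : Subgroup G, Γ.FG → IsFlatOver (gradedSubring 𝒜 Γ) M) :
    IsFlatOver A M := by
  classical
  intro n r x hrx
  -- Each `r i` lies in the sum of finitely many homogeneous pieces.
  have hmem : ∀ i, ∃ s : Finset G, r i ∈ ⨆ g ∈ s, 𝒜 g := by
    intro i
    have hi : r i ∈ ⨆ g, 𝒜 g := hA.iSup_eq_top ▸ AddSubgroup.mem_top _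
    rw [iSup_eq_iSup_finset] at hi
    have hdir : Directed (· ≤ ·) fun s : Finset G => ⨆ g ∈ s, 𝒜 g :=
      (Monotone.directed_le fun s t hst => biSup_mono fun g hg => Finset.le_iff_subset.mp hst hg)
    exact (AddSubgroup.mem_iSup_of_directed hdir).mp hi
  choose s hs using hmem
  set S : Finset G := Finset.univ.biUnion s with hS
  set Γ : Subgroup G := Subgroup.closure (S : Set G) with hΓ
  have hΓfg : Γ.FG := (Subgroup.fg_iff _).mpr ⟨(S : Set G), rfl, S.finite_toSet⟩
  set R : Subring A := gradedSubring 𝒜 Γ with hR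
  have hle : ∀ i, (⨆ g ∈ s i, 𝒜 g) ≤ R.toAddSubgroup := by
    intro i
    refine iSup₂_le fun g hg a ha => ?_
    have hgΓ : g ∈ Γ :=
      Subgroup.subset_closure
        (Finset.mem_coe.mpr (Finset.mem_biUnion.mpr ⟨i, Finset.mem_univ i, hg⟩))
    exact Subring.subset_closure (Set.mem_iUnion₂.mpr ⟨g, hgΓ, ha⟩)
  set r' : Fin n → R := fun i => ⟨r i, hle i (hs i)⟩ with hr'
  have hrx' : ∑ i, r' i • x i = 0 := by
    have : ∀ i, r' i • x i = r i • x i := fun i => rfl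
    simpa [this] using hrx
  obtain ⟨m, a, y, h1, h2⟩ := h Γ hΓfg n r' x hrx'
  refine ⟨m, fun i j => (a i j : A), y, fun j => ?_, fun i => ?_⟩
  · have := congrArg (Subtype.val) (h1 j)
    push_cast at this
    simpa using this
  · have := h2 i
    have hsm : ∀ j, a i j • y j = (a i j : A) • y j := fun j => rfl
    simpa [hsm] using this
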